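/- Let R be a nontrivial ring without zero divisors which is left Euclidean or right Euclidean, i.e. there exists a map δ : R \ {0} → ℕ such that for all a, b ∈ R with b ≠ 0 there exist q, r ∈ R with a = qb + r (respectively a = bq + r) and either r = 0 or δ(r) < δ(b). Then R is a GE₂-ring: GL₂(R) = GE₂(R), i.e. every invertible 2×2 matrix over R is a product of elementary matrices and invertible diagonal matrices. -/

import Mathlib

/-- The subgroup of `GL₂(R)` generated by the elementary matrices
`1 + r·e₁₂` and `1 + r·e₂₁`. -/
def E2 (R : Type*) [Ring R] : Subgroup (Matrix (Fin 2) (Fin 2) R)ˣ :=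
  Subgroup.closure {M : (Matrix (Fin 2) (Fin 2) R)ˣ | ∃ r : R,
    M.val = 1 + Matrix.single 0 1 r ∨
    M.val = 1 + Matrix.single 1 0 r}

/-- The subgroup of `GL₂(R)` of invertible diagonal matrices `diag(α, β)`, `α, β ∈ Rˣ`. -/
def D2 (R : Type*) [Ring R] : Subgroup (Matrix (Fin 2) (Fin 2) R)ˣ :=
  Subgroup.closure {M : (Matrix (Fin 2) (Fin 2) R)ˣ | ∃ α β : Rˣ,
    M.val = Matrix.diagonal ![(α : R), (β : R)]}

/-- The subgroup of `GL₂(R)` generated by `E₂(R)` and the invertible diagonal matrices. -/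
def GE2 (R : Type*) [Ring R] : Subgroup (Matrix (Fin 2) (Fin 2) R)ˣ := E2 R ⊔ D2 R

namespace GE2aux
variable {R : Type*} [Ring R]

def E12 (r : R) : (Matrix (Fin 2) (Fin 2) R)ˣ :=
  ⟨!![1,r;0,1], !![1,-r;0,1],
    by rw [Matrix.mul_fin_two]; simp [Matrix.one_fin_two],
    by rw [Matrix.mul_fin_two]; simp [Matrix.one_fin_two]⟩

def E21 (r : R) : (Matrix (Fin 2) (Fin 2) R)ˣ :=
  ⟨!![1,0;r,1], !![1,0;-r,1],
    by rw [Matrix.mul_fin_two]; simp [Matrix.one_fin_two],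
    by rw [Matrix.mul_fin_two]; simp [Matrix.one_fin_two]⟩

def Sw : (Matrix (Fin 2) (Fin 2) R)ˣ :=
  ⟨!![0,1;-1,0], !![0,-1;1,0],
    by rw [Matrix.mul_fin_two]; simp [Matrix.one_fin_two],
    by rw [Matrix.mul_fin_two]; simp [Matrix.one_fin_two]⟩

def Dg (α β : Rˣ) : (Matrix (Fin 2) (Fin 2) R)ˣ :=
  ⟨!![(α:R),0;0,(β:R)], !![((α⁻¹:Rˣ):R),0;0,((β⁻¹:Rˣ):R)],
    by rw [Matrix.mul_fin_two]; simp [Matrix.one_fin_two],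
    by rw [Matrix.mul_fin_two]; simp [Matrix.one_fin_two]⟩

lemma E12_mem (r : R) : E12 r ∈ GE2 R := by
  apply Subgroup.mem_sup_left
  apply Subgroup.subset_closure
  exact ⟨r, Or.inl (by ext i j; fin_cases i <;> fin_cases j <;> simp [E12, Matrix.single])⟩

lemma E21_mem (r : R) : E21 r ∈ GE2 R := by
  apply Subgroup.mem_sup_left
  apply Subgroup.subset_closure
  exact ⟨r, Or.inr (by ext i j; fin_cases i <;> fin_cases j <;> simp [E21, Matrix.single])⟩

lemma Sw_mem : (Sw : (Matrix (Fin 2) (Fin 2) R)ˣ) ∈ GE2 R := by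
  have : (Sw : (Matrix (Fin 2) (Fin 2) R)ˣ) = E12 1 * E21 (-1) * E12 1 := by
    apply Units.ext
    show (Sw.val : Matrix (Fin 2) (Fin 2) R) = _
    simp only [Units.val_mul, E12, E21, Sw]
    rw [Matrix.mul_fin_two, Matrix.mul_fin_two]
    norm_num
  rw [this]
  exact mul_mem (mul_mem (E12_mem 1) (E21_mem (-1))) (E12_mem 1)

lemma Dg_mem (α β : Rˣ) : Dg α β ∈ GE2 R := by
  apply Subgroup.mem_sup_right
  apply Subgroup.subset_closure
  exact ⟨α, β, by ext i j; fin_cases i <;> fin_cases j <;> simp [Dg, Matrix.diagonal]⟩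

variable [Nontrivial R] [NoZeroDivisors R]

lemma upper_mem (A : (Matrix (Fin 2) (Fin 2) R)ˣ) (hc : A.val 1 0 = 0) : A ∈ GE2 R := by
  set P : Matrix (Fin 2) (Fin 2) R := A.inv with hP
  have hAP : A.val * P = 1 := A.val_inv
  have hPA : P * A.val = 1 := A.inv_val
  have e10 : A.val 1 0 * P 0 0 + A.val 1 1 * P 1 0 = 0 := by
    have := congrFun (congrFun hAP 1) 0
    simpa [Matrix.mul_apply, Fin.sum_univ_two, Matrix.one_apply] using this
  have e11 : A.val 1 0 * P 0 1 + A.val 1 1 * P 1 1 = 1 := by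
    have := congrFun (congrFun hAP 1) 1
    simpa [Matrix.mul_apply, Fin.sum_univ_two, Matrix.one_apply] using this
  rw [hc, zero_mul, zero_add] at e10 e11
  have hd : A.val 1 1 ≠ 0 := by
    intro h0; rw [h0, zero_mul] at e11; exact zero_ne_one e11
  have hP10 : P 1 0 = 0 := by
    rcases mul_eq_zero.mp e10 with h | h
    · exact absurd h hd
    · exact h
  have e00 : A.val 0 0 * P 0 0 + A.val 0 1 * P 1 0 = 1 := by
    have := congrFun (congrFun hAP 0) 0
    simpa [Matrix.mul_apply, Fin.sum_univ_two, Matrix.one_apply] using this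
  rw [hP10, mul_zero, add_zero] at e00
  have f00 : P 0 0 * A.val 0 0 + P 0 1 * A.val 1 0 = 1 := by
    have := congrFun (congrFun hPA 0) 0
    simpa [Matrix.mul_apply, Fin.sum_univ_two, Matrix.one_apply] using this
  rw [hc, mul_zero, add_zero] at f00
  have f11 : P 1 0 * A.val 0 1 + P 1 1 * A.val 1 1 = 1 := by
    have := congrFun (congrFun hPA 1) 1
    simpa [Matrix.mul_apply, Fin.sum_univ_two, Matrix.one_apply] using this
  rw [hP10, zero_mul, zero_add] at f11
  set α : Rˣ := ⟨A.val 0 0, P 0 0, e00, f00⟩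
  set β : Rˣ := ⟨A.val 1 1, P 1 1, e11, f11⟩
  have key : A = Dg α β * E12 (P 0 0 * A.val 0 1) := by
    apply Units.ext
    show A.val = _
    simp only [Units.val_mul, Dg, E12]
    rw [Matrix.mul_fin_two]
    have : A.val 0 0 * (P 0 0 * A.val 0 1) = A.val 0 1 := by
      rw [← mul_assoc, e00, one_mul]
    rw [Matrix.eta_fin_two A.val, hc]
    simp [this]
    exact ⟨⟨rfl, this.symm⟩, rfl⟩
  rw [key]
  exact mul_mem (Dg_mem α β) (E12_mem _)

lemma lower_mem (A : (Matrix (Fin 2) (Fin 2) R)ˣ) (hb : A.val 0 1 = 0) : A ∈ GE2 R := by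
  set P : Matrix (Fin 2) (Fin 2) R := A.inv with hP
  have hAP : A.val * P = 1 := A.val_inv
  have hPA : P * A.val = 1 := A.inv_val
  have f01 : P 0 0 * A.val 0 1 + P 0 1 * A.val 1 1 = 0 := by
    have := congrFun (congrFun hPA 0) 1
    simpa [Matrix.mul_apply, Fin.sum_univ_two, Matrix.one_apply] using this
  have f11 : P 1 0 * A.val 0 1 + P 1 1 * A.val 1 1 = 1 := by
    have := congrFun (congrFun hPA 1) 1
    simpa [Matrix.mul_apply, Fin.sum_univ_two, Matrix.one_apply] using this
  rw [hb, mul_zero, zero_add] at f01 f11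
  have hd : A.val 1 1 ≠ 0 := by
    intro h0; rw [h0, mul_zero] at f11; exact zero_ne_one f11
  have hP01 : P 0 1 = 0 := by
    rcases mul_eq_zero.mp f01 with h | h
    · exact h
    · exact absurd h hd
  have e00 : A.val 0 0 * P 0 0 + A.val 0 1 * P 1 0 = 1 := by
    have := congrFun (congrFun hAP 0) 0
    simpa [Matrix.mul_apply, Fin.sum_univ_two, Matrix.one_apply] using this
  rw [hb, zero_mul, add_zero] at e00
  have f00 : P 0 0 * A.val 0 0 + P 0 1 * A.val 1 0 = 1 := by
    have := congrFun (congrFun hPA 0) 0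
    simpa [Matrix.mul_apply, Fin.sum_univ_two, Matrix.one_apply] using this
  rw [hP01, zero_mul, add_zero] at f00
  have e11 : A.val 1 0 * P 0 1 + A.val 1 1 * P 1 1 = 1 := by
    have := congrFun (congrFun hAP 1) 1
    simpa [Matrix.mul_apply, Fin.sum_univ_two, Matrix.one_apply] using this
  rw [hP01, mul_zero, zero_add] at e11
  set α : Rˣ := ⟨A.val 0 0, P 0 0, e00, f00⟩
  set β : Rˣ := ⟨A.val 1 1, P 1 1, e11, f11⟩
  have key : A = E21 (A.val 1 0 * P 0 0) * Dg α β := by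
    apply Units.ext
    show A.val = _
    simp only [Units.val_mul, Dg, E21]
    rw [Matrix.mul_fin_two]
    have : A.val 1 0 * P 0 0 * A.val 0 0 = A.val 1 0 := by
      rw [mul_assoc, f00, mul_one]
    rw [Matrix.eta_fin_two A.val, hb]
    simp [this]
    exact ⟨rfl, this.symm, rfl⟩
  rw [key]
  exact mul_mem (E21_mem _) (Dg_mem α β)

end GE2aux

/-- A nontrivial ring without zero divisors that is left Euclidean or
right Euclidean is a `GE₂`-ring: every invertible `2×2` matrix is a product of elementary
and invertible diagonal matrices, i.e. `GE₂(R) = GL₂(R)`. -/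
theorem euclidean_is_GE2_ring (R : Type*) [Ring R] [Nontrivial R] [NoZeroDivisors R]
    (h : (∃ δ : R → ℕ, ∀ a b : R, b ≠ 0 →
            ∃ q r : R, a = q * b + r ∧ (r = 0 ∨ δ r < δ b)) ∨
         (∃ δ : R → ℕ, ∀ a b : R, b ≠ 0 →
            ∃ q r : R, a = b * q + r ∧ (r = 0 ∨ δ r < δ b))) :
    GE2 R = ⊤ := by
  open GE2aux in
  rw [Subgroup.eq_top_iff']
  rcases h with ⟨δ, hδ⟩ | ⟨δ, hδ⟩
  · -- left Euclidean: reduce the (1,0) entry by row operations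
    have main : ∀ n (A : (Matrix (Fin 2) (Fin 2) R)ˣ),
        (A.val 1 0 = 0 ∨ δ (A.val 1 0) < n) → A ∈ GE2 R := by
      intro n
      induction n with
      | zero =>
        intro A hA
        rcases hA with h0 | h0
        · exact upper_mem A h0
        · omega
      | succ n ih =>
        intro A hA
        by_cases hc : A.val 1 0 = 0
        · exact upper_mem A hc
        · have hlt : δ (A.val 1 0) < n + 1 := hA.resolve_left hc
          obtain ⟨q, r, hqr, hr⟩ := hδ (A.val 0 0) (A.val 1 0) hc
          set B := Sw⁻¹ * E12 (-q) * A with hBdef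
          have hB10 : B.val 1 0 = r := by
            have : B.val 1 0 = A.val 0 0 + -q * A.val 1 0 := by
              simp [hBdef, Sw, E12, Units.val_mul, Matrix.mul_apply, Fin.sum_univ_two]
            rw [this, hqr]
            noncomm_ring
          have hBmem : B ∈ GE2 R := by
            apply ih B
            rcases hr with h0 | h0
            · left; rw [hB10, h0]
            · right; rw [hB10]; omega
          have hAeq : A = (E12 (-q))⁻¹ * (Sw * B) := by
            rw [hBdef]; group
          rw [hAeq]
          exact mul_mem (inv_mem (E12_mem _)) (mul_mem Sw_mem hBmem)
    intro A
    exact main (δ (A.val 1 0) + 1) A (Or.inr (Nat.lt_succ_self _))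
  · -- right Euclidean: reduce the (0,1) entry by column operations
    have main : ∀ n (A : (Matrix (Fin 2) (Fin 2) R)ˣ),
        (A.val 0 1 = 0 ∨ δ (A.val 0 1) < n) → A ∈ GE2 R := by
      intro n
      induction n with
      | zero =>
        intro A hA
        rcases hA with h0 | h0
        · exact lower_mem A h0
        · omega
      | succ n ih =>
        intro A hA
        by_cases hb : A.val 0 1 = 0
        · exact lower_mem A hb
        · have hlt : δ (A.val 0 1) < n + 1 := hA.resolve_left hb
          obtain ⟨q, r, hqr, hr⟩ := hδ (A.val 0 0) (A.val 0 1) hb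
          set B := A * E21 (-q) * Sw with hBdef
          have hB01 : B.val 0 1 = r := by
            have : B.val 0 1 = A.val 0 0 + A.val 0 1 * -q := by
              simp [hBdef, Sw, E21, Units.val_mul, Matrix.mul_apply, Fin.sum_univ_two]
            rw [this, hqr]
            noncomm_ring
          have hBmem : B ∈ GE2 R := by
            apply ih B
            rcases hr with h0 | h0
            · left; rw [hB01, h0]
            · right; rw [hB01]; omega
          have hAeq : A = (B * Sw⁻¹) * (E21 (-q))⁻¹ := by
            rw [hBdef]; group
          rw [hAeq]
          exact mul_mem (mul_mem hBmem (inv_mem Sw_mem)) (inv_mem (E21_mem _))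
    intro A
    exact main (δ (A.val 0 1) + 1) A (Or.inr (Nat.lt_succ_self _))
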